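/- Let w : [0,∞) → ℝ be a bounded continuous nonnegative function, let ν be a finite nonnegative Borel measure on [0,∞), let α > 0, δ > 0, T > 0, and let Θ be a finite nonnegative Borel measure on [0,∞). Suppose μ, η : [0, T] → (finite nonnegative Borel measures on [0,∞)) are continuous with respect to the total variation norm, satisfy μ(0) = η(0) = Θ, satisfy ∫ w dμ(t) ≥ δ and ∫ w dη(t) ≥ δ for all t ∈ [0, T], and both satisfy the fluid model equation: for every continuously differentiable g : [0,∞) → ℝ with g and g' bounded, and every t ∈ [0, T], ∫ g dμ(t) = ∫ g dΘ − ∫₀^t (∫ g'·w dμ(s))/(∫ w dμ(s)) ds + α·t·∫ g dν (and the same with μ replaced by η). Then for every continuously differentiable g with ‖g‖_∞ ≤ 1 and ‖g'‖_∞ ≤ 1 and every t ∈ [0, T], |∫ g dμ(t) − ∫ g dη(t)| ≤ (2‖w‖_∞/δ) · ∫₀^t ‖μ(s) − η(s)‖_TV ds. -/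

import Mathlib

open MeasureTheory

/-- The total variation norm `‖μ - η‖_TV` of the difference of two finite measures. -/
noncomputable def tvNorm (μ η : Measure ℝ) [IsFiniteMeasure μ] [IsFiniteMeasure η] : ℝ :=
  ((μ.toSignedMeasure - η.toSignedMeasure).totalVariation Set.univ).toReal

/-- The supremum norm `‖f‖_∞` of a real-valued function. -/
noncomputable def supNorm (f : ℝ → ℝ) : ℝ := ⨆ x, |f x|

lemma tvNorm_nonneg (μ η : Measure ℝ) [IsFiniteMeasure μ] [IsFiniteMeasure η] :
    0 ≤ tvNorm μ η := ENNReal.toReal_nonneg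

lemma tvNorm_exists_decomp (μ η : Measure ℝ) [IsFiniteMeasure μ] [IsFiniteMeasure η] :
    ∃ (P N : Measure ℝ) (_ : IsFiniteMeasure P) (_ : IsFiniteMeasure N),
      μ + N = η + P ∧ tvNorm μ η = (P Set.univ).toReal + (N Set.univ).toReal := by
  set s := μ.toSignedMeasure - η.toSignedMeasure with hs
  refine ⟨s.toJordanDecomposition.posPart, s.toJordanDecomposition.negPart,
    inferInstance, inferInstance, ?_, ?_⟩
  · have h := s.toSignedMeasure_toJordanDecomposition
    rw [JordanDecomposition.toSignedMeasure] at h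
    have h3 : μ.toSignedMeasure - η.toSignedMeasure =
        s.toJordanDecomposition.posPart.toSignedMeasure
          - s.toJordanDecomposition.negPart.toSignedMeasure := by rw [h]
    rw [sub_eq_sub_iff_add_eq_add] at h3
    rw [← Measure.toSignedMeasure_eq_toSignedMeasure_iff,
      Measure.toSignedMeasure_add, Measure.toSignedMeasure_add, h3, add_comm]
  · rw [tvNorm, SignedMeasure.totalVariation, ← hs, Measure.add_apply,
      ENNReal.toReal_add (measure_ne_top _ _) (measure_ne_top _ _)]

lemma tvNorm_le_decomp (μ η P N : Measure ℝ) [IsFiniteMeasure μ] [IsFiniteMeasure η]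
    [IsFiniteMeasure P] [IsFiniteMeasure N] (h : μ + N = η + P) :
    tvNorm μ η ≤ (P Set.univ).toReal + (N Set.univ).toReal := by
  set s := μ.toSignedMeasure - η.toSignedMeasure with hs
  obtain ⟨i, hi₁, hi₂, hi₃, hpos, hneg⟩ := s.toJordanDecomposition_spec
  have hkey : ∀ j : Set ℝ, MeasurableSet j →
      s j = (P j).toReal - (N j).toReal := by
    intro j hj
    have happ : (μ + N) j = (η + P) j := by rw [h]
    rw [Measure.add_apply, Measure.add_apply] at happ
    have h1 := ENNReal.toReal_add (measure_ne_top μ j) (measure_ne_top N j)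
    have h2 := ENNReal.toReal_add (measure_ne_top η j) (measure_ne_top P j)
    have : (μ j).toReal + (N j).toReal = (η j).toReal + (P j).toReal := by
      rw [← h1, ← h2, happ]
    rw [hs, VectorMeasure.sub_apply, Measure.toSignedMeasure_apply_measurable hj,
      Measure.toSignedMeasure_apply_measurable hj]
    simp only [measureReal_def]
    linarith
  have hPmono : (P i).toReal ≤ (P Set.univ).toReal :=
    ENNReal.toReal_mono (measure_ne_top _ _) (measure_mono (Set.subset_univ _))
  have hNmono : (N iᶜ).toReal ≤ (N Set.univ).toReal :=
    ENNReal.toReal_mono (measure_ne_top _ _) (measure_mono (Set.subset_univ _))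
  have hposval : (s.toJordanDecomposition.posPart Set.univ).toReal ≤ (P Set.univ).toReal := by
    rw [hpos, SignedMeasure.toMeasureOfZeroLE_apply _ hi₂ hi₁ MeasurableSet.univ]
    simp only [Set.inter_univ, ENNReal.coe_toReal, NNReal.coe_mk]
    rw [hkey i hi₁]
    have : (0:ℝ) ≤ (N i).toReal := ENNReal.toReal_nonneg
    have : (P i).toReal ≤ (P Set.univ).toReal :=
      ENNReal.toReal_mono (measure_ne_top _ _) (measure_mono (Set.subset_univ _))
    linarith
  have hnegval : (s.toJordanDecomposition.negPart Set.univ).toReal ≤ (N Set.univ).toReal := by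
    rw [hneg, SignedMeasure.toMeasureOfLEZero_apply _ hi₃ hi₁.compl MeasurableSet.univ]
    simp only [Set.inter_univ, ENNReal.coe_toReal, NNReal.coe_mk]
    rw [hkey iᶜ hi₁.compl]
    have : (0:ℝ) ≤ (P iᶜ).toReal := ENNReal.toReal_nonneg
    linarith
  have : tvNorm μ η = (s.toJordanDecomposition.posPart Set.univ).toReal
      + (s.toJordanDecomposition.negPart Set.univ).toReal := by
    rw [tvNorm, SignedMeasure.totalVariation, ← hs, Measure.add_apply,
      ENNReal.toReal_add (measure_ne_top _ _) (measure_ne_top _ _)]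
  linarith

lemma integrable_of_bdd {ξ : Measure ℝ} [IsFiniteMeasure ξ] {f : ℝ → ℝ} (hf : Continuous f)
    {C : ℝ} (hC : ∀ x, |f x| ≤ C) : Integrable f ξ :=
  (integrable_const C).mono' hf.aestronglyMeasurable
    (Filter.Eventually.of_forall fun x => by simpa [Real.norm_eq_abs] using hC x)

lemma integral_diff_le_tvNorm (μ η : Measure ℝ) [IsFiniteMeasure μ] [IsFiniteMeasure η]
    {f : ℝ → ℝ} (hf : Continuous f) {C : ℝ} (hC : ∀ x, |f x| ≤ C) :
    |∫ x, f x ∂μ - ∫ x, f x ∂η| ≤ C * tvNorm μ η := by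
  obtain ⟨P, N, hPf, hNf, hPN, htv⟩ := tvNorm_exists_decomp μ η
  have hiμ : Integrable f μ := integrable_of_bdd hf hC
  have hiη : Integrable f η := integrable_of_bdd hf hC
  have hiP : Integrable f P := integrable_of_bdd hf hC
  have hiN : Integrable f N := integrable_of_bdd hf hC
  have hadd : (∫ x, f x ∂μ) + ∫ x, f x ∂N = (∫ x, f x ∂η) + ∫ x, f x ∂P := by
    rw [← integral_add_measure hiμ hiN, ← integral_add_measure hiη hiP, hPN]
  have hsub : (∫ x, f x ∂μ) - ∫ x, f x ∂η = (∫ x, f x ∂P) - ∫ x, f x ∂N := by linarith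
  have hbnd : ∀ (ξ : Measure ℝ) (_ : IsFiniteMeasure ξ),
      |∫ x, f x ∂ξ| ≤ C * (ξ Set.univ).toReal := by
    intro ξ hξ
    calc |∫ x, f x ∂ξ| ≤ ∫ x, |f x| ∂ξ := by
          simpa [Real.norm_eq_abs] using norm_integral_le_integral_norm (μ := ξ) f
      _ ≤ ∫ _, C ∂ξ := integral_mono (integrable_of_bdd hf hC).abs (integrable_const C)
            (fun x => by simpa using hC x)
      _ = (ξ Set.univ).toReal * C := by rw [integral_const]; simp [smul_eq_mul]; exact Or.inl rfl
      _ = C * (ξ Set.univ).toReal := mul_comm _ _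
  have hC0 : 0 ≤ C := le_trans (abs_nonneg (f 0)) (hC 0)
  calc |(∫ x, f x ∂μ) - ∫ x, f x ∂η| = |(∫ x, f x ∂P) - ∫ x, f x ∂N| := by rw [hsub]
    _ ≤ |∫ x, f x ∂P| + |∫ x, f x ∂N| := abs_sub _ _
    _ ≤ C * (P Set.univ).toReal + C * (N Set.univ).toReal := add_le_add (hbnd P hPf) (hbnd N hNf)
    _ = C * tvNorm μ η := by rw [htv]; ring

lemma tvNorm_symm (μ η : Measure ℝ) [IsFiniteMeasure μ] [IsFiniteMeasure η] :
    tvNorm μ η = tvNorm η μ := by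
  rw [tvNorm, tvNorm, ← neg_sub μ.toSignedMeasure η.toSignedMeasure,
    SignedMeasure.totalVariation_neg]

lemma tvNorm_triangle (a b c : Measure ℝ) [IsFiniteMeasure a] [IsFiniteMeasure b]
    [IsFiniteMeasure c] : tvNorm a c ≤ tvNorm a b + tvNorm b c := by
  obtain ⟨P1, N1, h1, h2, hab, htv1⟩ := tvNorm_exists_decomp a b
  obtain ⟨P2, N2, h3, h4, hbc, htv2⟩ := tvNorm_exists_decomp b c
  have hdec : a + (N1 + N2) = c + (P1 + P2) := by
    have : a + N1 + N2 = b + P1 + N2 := by rw [hab]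
    have h5 : b + N2 + P1 = c + P2 + P1 := by rw [hbc]
    calc a + (N1 + N2) = a + N1 + N2 := by rw [add_assoc]
      _ = b + P1 + N2 := by rw [hab]
      _ = b + N2 + P1 := by rw [add_assoc, add_assoc, add_comm P1 N2]
      _ = c + P2 + P1 := by rw [hbc]
      _ = c + (P1 + P2) := by rw [add_assoc, add_comm P2 P1]
  have := tvNorm_le_decomp a c (P1 + P2) (N1 + N2) hdec
  rw [Measure.add_apply, Measure.add_apply,
    ENNReal.toReal_add (measure_ne_top _ _) (measure_ne_top _ _),
    ENNReal.toReal_add (measure_ne_top _ _) (measure_ne_top _ _)] at this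
  linarith

lemma continuousOn_integral_of_tvcont (μ : ℝ → Measure ℝ) [∀ s, IsFiniteMeasure (μ s)] (T : ℝ)
    (hμcont : ∀ s ∈ Set.Icc (0:ℝ) T, ∀ ε > (0:ℝ), ∃ ρ > (0:ℝ),
      ∀ s' ∈ Set.Icc (0:ℝ) T, |s' - s| < ρ → tvNorm (μ s) (μ s') < ε)
    {f : ℝ → ℝ} (hf : Continuous f) {C : ℝ} (hC : ∀ x, |f x| ≤ C) :
    ContinuousOn (fun s => ∫ x, f x ∂(μ s)) (Set.Icc (0:ℝ) T) := by
  have hC0 : 0 ≤ C := le_trans (abs_nonneg (f 0)) (hC 0)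
  rw [Metric.continuousOn_iff]
  intro s hs ε hε
  obtain ⟨ρ, hρ, hcont⟩ := hμcont s hs (ε / (C + 1)) (by positivity)
  refine ⟨ρ, hρ, fun s' hs' hd => ?_⟩
  rw [Real.dist_eq] at hd ⊢
  have h1 := integral_diff_le_tvNorm (μ s) (μ s') hf hC
  have h2 := hcont s' hs' hd
  have h3 : 0 ≤ tvNorm (μ s) (μ s') := tvNorm_nonneg _ _
  have : C * tvNorm (μ s) (μ s') < ε := by
    calc C * tvNorm (μ s) (μ s') ≤ (C + 1) * tvNorm (μ s) (μ s') := by nlinarith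
      _ < (C + 1) * (ε / (C + 1)) := by
          exact mul_lt_mul_of_pos_left h2 (by positivity)
      _ = ε := by field_simp
  rw [abs_sub_comm]
  linarith

lemma continuousOn_tvNorm (μ η : ℝ → Measure ℝ) [∀ s, IsFiniteMeasure (μ s)]
    [∀ s, IsFiniteMeasure (η s)] (T : ℝ)
    (hμcont : ∀ s ∈ Set.Icc (0:ℝ) T, ∀ ε > (0:ℝ), ∃ ρ > (0:ℝ),
      ∀ s' ∈ Set.Icc (0:ℝ) T, |s' - s| < ρ → tvNorm (μ s) (μ s') < ε)
    (hηcont : ∀ s ∈ Set.Icc (0:ℝ) T, ∀ ε > (0:ℝ), ∃ ρ > (0:ℝ),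
      ∀ s' ∈ Set.Icc (0:ℝ) T, |s' - s| < ρ → tvNorm (η s) (η s') < ε) :
    ContinuousOn (fun s => tvNorm (μ s) (η s)) (Set.Icc (0:ℝ) T) := by
  rw [Metric.continuousOn_iff]
  intro s hs ε hε
  obtain ⟨ρ1, hρ1, hc1⟩ := hμcont s hs (ε / 2) (by positivity)
  obtain ⟨ρ2, hρ2, hc2⟩ := hηcont s hs (ε / 2) (by positivity)
  refine ⟨min ρ1 ρ2, lt_min hρ1 hρ2, fun s' hs' hd => ?_⟩
  rw [Real.dist_eq] at hd ⊢
  have hd1 : |s' - s| < ρ1 := lt_of_lt_of_le hd (min_le_left _ _)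
  have hd2 : |s' - s| < ρ2 := lt_of_lt_of_le hd (min_le_right _ _)
  have h1 := hc1 s' hs' hd1
  have h2 := hc2 s' hs' hd2
  have t1 : tvNorm (μ s') (η s') ≤ tvNorm (μ s') (μ s) + (tvNorm (μ s) (η s)
      + tvNorm (η s) (η s')) :=
    le_trans (tvNorm_triangle (μ s') (μ s) (η s'))
      (by linarith [tvNorm_triangle (μ s) (η s) (η s')])
  have t2 : tvNorm (μ s) (η s) ≤ tvNorm (μ s) (μ s') + (tvNorm (μ s') (η s')
      + tvNorm (η s') (η s)) :=
    le_trans (tvNorm_triangle (μ s) (μ s') (η s))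
      (by linarith [tvNorm_triangle (μ s') (η s') (η s)])
  rw [tvNorm_symm (μ s') (μ s)] at t1
  rw [tvNorm_symm (η s') (η s)] at t2
  rw [abs_lt]
  constructor <;> linarith

/-- a priori estimate behind uniqueness of the fluid limit.  If two
total-variation-continuous measure-valued paths `μ, η` on `[0, T]` start from the same
initial measure `Θ`, keep their `w`-masses above `δ`, and both solve the fluid model
equation `⟨g, μ(t)⟩ = ⟨g, Θ⟩ − ∫₀ᵗ ⟨g'w, μ(s)⟩/⟨w, μ(s)⟩ ds + α t ⟨g, ν⟩` for all
bounded `C¹` test functions `g` with bounded derivative, then for every such `g` with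
`‖g‖_∞ ≤ 1`, `‖g'‖_∞ ≤ 1` and every `t ∈ [0, T]`,
`|⟨g, μ(t)⟩ − ⟨g, η(t)⟩| ≤ (2‖w‖_∞/δ) ∫₀ᵗ ‖μ(s) − η(s)‖_TV ds`. -/
theorem stmt_4 (w : ℝ → ℝ) (hwcont : Continuous w) (hwnonneg : ∀ x, 0 ≤ w x)
    (hwbdd : ∃ C, ∀ x, |w x| ≤ C)
    (ν : Measure ℝ) [IsFiniteMeasure ν] (hνsupp : ν (Set.Iio 0) = 0)
    (α δ T : ℝ) (hα : 0 < α) (hδ : 0 < δ) (hT : 0 < T)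
    (Θ : Measure ℝ) [IsFiniteMeasure Θ] (hΘsupp : Θ (Set.Iio 0) = 0)
    (μ η : ℝ → Measure ℝ)
    [∀ s, IsFiniteMeasure (μ s)] [∀ s, IsFiniteMeasure (η s)]
    (hμsupp : ∀ s ∈ Set.Icc (0:ℝ) T, μ s (Set.Iio 0) = 0)
    (hηsupp : ∀ s ∈ Set.Icc (0:ℝ) T, η s (Set.Iio 0) = 0)
    (hμ0 : μ 0 = Θ) (hη0 : η 0 = Θ)
    (hμcont : ∀ s ∈ Set.Icc (0:ℝ) T, ∀ ε > (0:ℝ), ∃ ρ > (0:ℝ),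
      ∀ s' ∈ Set.Icc (0:ℝ) T, |s' - s| < ρ → tvNorm (μ s) (μ s') < ε)
    (hηcont : ∀ s ∈ Set.Icc (0:ℝ) T, ∀ ε > (0:ℝ), ∃ ρ > (0:ℝ),
      ∀ s' ∈ Set.Icc (0:ℝ) T, |s' - s| < ρ → tvNorm (η s) (η s') < ε)
    (hμw : ∀ s ∈ Set.Icc (0:ℝ) T, δ ≤ ∫ x, w x ∂(μ s))
    (hηw : ∀ s ∈ Set.Icc (0:ℝ) T, δ ≤ ∫ x, w x ∂(η s))
    (hμeq : ∀ g g' : ℝ → ℝ, (∀ x, HasDerivAt g (g' x) x) → Continuous g' →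
      (∃ C, ∀ x, |g x| ≤ C) → (∃ C, ∀ x, |g' x| ≤ C) →
      ∀ t ∈ Set.Icc (0:ℝ) T,
        (∫ x, g x ∂(μ t)) = (∫ x, g x ∂Θ)
          - (∫ s in (0:ℝ)..t, (∫ x, g' x * w x ∂(μ s)) / (∫ x, w x ∂(μ s)))
          + α * t * ∫ x, g x ∂ν)
    (hηeq : ∀ g g' : ℝ → ℝ, (∀ x, HasDerivAt g (g' x) x) → Continuous g' →
      (∃ C, ∀ x, |g x| ≤ C) → (∃ C, ∀ x, |g' x| ≤ C) →
      ∀ t ∈ Set.Icc (0:ℝ) T,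
        (∫ x, g x ∂(η t)) = (∫ x, g x ∂Θ)
          - (∫ s in (0:ℝ)..t, (∫ x, g' x * w x ∂(η s)) / (∫ x, w x ∂(η s)))
          + α * t * ∫ x, g x ∂ν) :
    ∀ g g' : ℝ → ℝ, (∀ x, HasDerivAt g (g' x) x) → Continuous g' →
      (∀ x, |g x| ≤ 1) → (∀ x, |g' x| ≤ 1) →
      ∀ t ∈ Set.Icc (0:ℝ) T,
        |(∫ x, g x ∂(μ t)) - ∫ x, g x ∂(η t)|
          ≤ (2 * supNorm w / δ) * ∫ s in (0:ℝ)..t, tvNorm (μ s) (η s) := by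
  intro g g' hg hg'cont hg1 hg'1 t ht
  obtain ⟨C0, hC0⟩ := hwbdd
  set W := supNorm w with hWdef
  have hW : ∀ x, |w x| ≤ W :=
    fun x => le_ciSup ⟨C0, by rintro _ ⟨y, rfl⟩; exact hC0 y⟩ x
  have hW0 : 0 ≤ W := le_trans (abs_nonneg (w 0)) (hW 0)
  have hgw : ∀ x, |g' x * w x| ≤ W := fun x => by
    rw [abs_mul]
    calc |g' x| * |w x| ≤ 1 * |w x| :=
          mul_le_mul_of_nonneg_right (hg'1 x) (abs_nonneg _)
      _ = |w x| := one_mul _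
      _ ≤ W := hW x
  have hgwcont : Continuous (fun x => g' x * w x) := hg'cont.mul hwcont
  -- continuity of the drift terms
  have hFc : ContinuousOn
      (fun s => (∫ x, g' x * w x ∂(μ s)) / (∫ x, w x ∂(μ s))) (Set.Icc (0:ℝ) T) :=
    (continuousOn_integral_of_tvcont μ T hμcont hgwcont hgw).div
      (continuousOn_integral_of_tvcont μ T hμcont hwcont hW)
      (fun s hs => ne_of_gt (lt_of_lt_of_le hδ (hμw s hs)))
  have hGc : ContinuousOn
      (fun s => (∫ x, g' x * w x ∂(η s)) / (∫ x, w x ∂(η s))) (Set.Icc (0:ℝ) T) :=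
    (continuousOn_integral_of_tvcont η T hηcont hgwcont hgw).div
      (continuousOn_integral_of_tvcont η T hηcont hwcont hW)
      (fun s hs => ne_of_gt (lt_of_lt_of_le hδ (hηw s hs)))
  have htvc : ContinuousOn (fun s => tvNorm (μ s) (η s)) (Set.Icc (0:ℝ) T) :=
    continuousOn_tvNorm μ η T hμcont hηcont
  have hsub : Set.uIcc (0:ℝ) t ⊆ Set.Icc (0:ℝ) T := by
    rw [Set.uIcc_of_le ht.1]; exact Set.Icc_subset_Icc le_rfl ht.2
  have hFint : IntervalIntegrable
      (fun s => (∫ x, g' x * w x ∂(μ s)) / (∫ x, w x ∂(μ s))) volume 0 t :=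
    (hFc.mono hsub).intervalIntegrable
  have hGint : IntervalIntegrable
      (fun s => (∫ x, g' x * w x ∂(η s)) / (∫ x, w x ∂(η s))) volume 0 t :=
    (hGc.mono hsub).intervalIntegrable
  have hGFabsint : IntervalIntegrable
      (fun s => |(∫ x, g' x * w x ∂(η s)) / (∫ x, w x ∂(η s))
        - (∫ x, g' x * w x ∂(μ s)) / (∫ x, w x ∂(μ s))|) volume 0 t :=
    (((hGc.mono hsub).sub (hFc.mono hsub)).abs).intervalIntegrable
  have hboundint : IntervalIntegrable
      (fun s => 2 * W / δ * tvNorm (μ s) (η s)) volume 0 t :=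
    (continuousOn_const.mul (htvc.mono hsub)).intervalIntegrable
  -- difference of the two fluid model equations
  have heqμ := hμeq g g' hg hg'cont ⟨1, hg1⟩ ⟨1, hg'1⟩ t ht
  have heqη := hηeq g g' hg hg'cont ⟨1, hg1⟩ ⟨1, hg'1⟩ t ht
  have hdiff : (∫ x, g x ∂(μ t)) - ∫ x, g x ∂(η t)
      = (∫ s in (0:ℝ)..t, (∫ x, g' x * w x ∂(η s)) / (∫ x, w x ∂(η s)))
        - ∫ s in (0:ℝ)..t, (∫ x, g' x * w x ∂(μ s)) / (∫ x, w x ∂(μ s)) := by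
    rw [heqμ, heqη]; ring
  -- pointwise bound
  have key : ∀ s ∈ Set.Icc (0:ℝ) t,
      |(∫ x, g' x * w x ∂(η s)) / (∫ x, w x ∂(η s))
        - (∫ x, g' x * w x ∂(μ s)) / (∫ x, w x ∂(μ s))|
      ≤ 2 * W / δ * tvNorm (μ s) (η s) := by
    intro s hs
    have hsT : s ∈ Set.Icc (0:ℝ) T := ⟨hs.1, hs.2.trans ht.2⟩
    set a := ∫ x, g' x * w x ∂(μ s) with ha
    set b := ∫ x, w x ∂(μ s) with hb
    set c := ∫ x, g' x * w x ∂(η s) with hc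
    set d := ∫ x, w x ∂(η s) with hd
    set tv := tvNorm (μ s) (η s) with htvdef
    have hbδ : δ ≤ b := hμw s hsT
    have hdδ : δ ≤ d := hηw s hsT
    have hb0 : 0 < b := lt_of_lt_of_le hδ hbδ
    have hd0 : 0 < d := lt_of_lt_of_le hδ hdδ
    have htv0 : 0 ≤ tv := tvNorm_nonneg _ _
    have hac : |a - c| ≤ W * tv := integral_diff_le_tvNorm (μ s) (η s) hgwcont hgw
    have hbd : |b - d| ≤ W * tv := integral_diff_le_tvNorm (μ s) (η s) hwcont hW
    have habs_int : Integrable (fun x => |g' x| * |w x|) (μ s) := by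
      refine integrable_of_bdd (hg'cont.abs.mul hwcont.abs) (C := W) (fun x => ?_)
      rw [abs_of_nonneg (mul_nonneg (abs_nonneg _) (abs_nonneg _)), ← abs_mul]
      exact hgw x
    have hab : |a| ≤ b := by
      calc |a| ≤ ∫ x, |g' x| * |w x| ∂(μ s) := by
            simpa [Real.norm_eq_abs] using
              norm_integral_le_integral_norm (μ := μ s) (fun x => g' x * w x)
        _ ≤ ∫ x, w x ∂(μ s) := by
            refine integral_mono habs_int (integrable_of_bdd hwcont hW) (fun x => ?_)
            calc |g' x| * |w x| ≤ 1 * |w x| :=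
                  mul_le_mul_of_nonneg_right (hg'1 x) (abs_nonneg _)
              _ = w x := by rw [one_mul, abs_of_nonneg (hwnonneg x)]
    have heq : c / d - a / b = (c - a) / d + a * (b - d) / (b * d) := by
      field_simp; ring
    have hterm1 : |(c - a) / d| ≤ W * tv / δ := by
      rw [abs_div, abs_of_pos hd0]
      exact div_le_div₀ (by positivity) (by rwa [abs_sub_comm] at hac) hδ hdδ
    have hterm2 : |a * (b - d) / (b * d)| ≤ W * tv / δ := by
      rw [abs_div, abs_mul, abs_of_pos (mul_pos hb0 hd0)]
      have h1 : |a| * |b - d| ≤ b * (W * tv) :=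
        mul_le_mul hab hbd (abs_nonneg _) (le_of_lt hb0)
      calc |a| * |b - d| / (b * d) ≤ b * (W * tv) / (b * d) :=
            div_le_div_of_nonneg_right h1 (mul_pos hb0 hd0).le
        _ = W * tv / d := by rw [mul_div_mul_left _ _ (ne_of_gt hb0)]
        _ ≤ W * tv / δ := div_le_div₀ (by positivity) le_rfl hδ hdδ
    calc |c / d - a / b| ≤ |(c - a) / d| + |a * (b - d) / (b * d)| := by
          rw [heq]; exact abs_add_le _ _
      _ ≤ W * tv / δ + W * tv / δ := add_le_add hterm1 hterm2
      _ = 2 * W / δ * tv := by ring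
  -- conclude
  calc |(∫ x, g x ∂(μ t)) - ∫ x, g x ∂(η t)|
      = |∫ s in (0:ℝ)..t, ((∫ x, g' x * w x ∂(η s)) / (∫ x, w x ∂(η s))
          - (∫ x, g' x * w x ∂(μ s)) / (∫ x, w x ∂(μ s)))| := by
        rw [hdiff, intervalIntegral.integral_sub hGint hFint]
    _ ≤ ∫ s in (0:ℝ)..t, |(∫ x, g' x * w x ∂(η s)) / (∫ x, w x ∂(η s))
          - (∫ x, g' x * w x ∂(μ s)) / (∫ x, w x ∂(μ s))| :=
        intervalIntegral.abs_integral_le_integral_abs ht.1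
    _ ≤ ∫ s in (0:ℝ)..t, 2 * W / δ * tvNorm (μ s) (η s) :=
        intervalIntegral.integral_mono_on ht.1 hGFabsint hboundint key
    _ = 2 * W / δ * ∫ s in (0:ℝ)..t, tvNorm (μ s) (η s) :=
        intervalIntegral.integral_const_mul _ _
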